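/- Let q be a prime power, K a finite field with q² elements, and a, b, c, d ∈ K. If the rational function g = (d^q·X³ + c^q·X² + b^q·X + a^q)/(a·X³ + b·X² + c·X + d) has degree 1, then g permutes μ_{q+1}. -/

import Mathlib

open Polynomial

open scoped Classical

/-- The denominator polynomial `D(X) = a·X³ + b·X² + c·X + d`. -/
noncomputable def Dpoly {K : Type*} [Field K] (a b c d : K) : K[X] :=
  C a * X ^ 3 + C b * X ^ 2 + C c * X + C d

/-- The numerator polynomial `N(X) = d^q·X³ + c^q·X² + b^q·X + a^q`. -/
noncomputable def Npoly {K : Type*} [Field K] (q : ℕ) (a b c d : K) : K[X] :=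
  C (d ^ q) * X ^ 3 + C (c ^ q) * X ^ 2 + C (b ^ q) * X + C (a ^ q)

/-- Numerator of `g = N/D` in lowest terms. -/
noncomputable def numer₀ {K : Type*} [Field K] (q : ℕ) (a b c d : K) : K[X] :=
  Npoly q a b c d / EuclideanDomain.gcd (Npoly q a b c d) (Dpoly a b c d)

/-- Denominator of `g = N/D` in lowest terms. -/
noncomputable def denom₀ {K : Type*} [Field K] (q : ℕ) (a b c d : K) : K[X] :=
  Dpoly a b c d / EuclideanDomain.gcd (Npoly q a b c d) (Dpoly a b c d)

/-- The degree of the rational function `g = N/D`. -/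
noncomputable def gDeg {K : Type*} [Field K] (q : ℕ) (a b c d : K) : ℕ :=
  max (numer₀ q a b c d).natDegree (denom₀ q a b c d).natDegree

/-- `μ_{q+1} = {x ∈ K : x^{q+1} = 1}`. -/
def mu (q : ℕ) (K : Type*) [Monoid K] : Set K := {x : K | x ^ (q + 1) = 1}

/-- `g` permutes `μ_{q+1}`: the map `x ↦ N₀(x)·D₀(x)⁻¹` is a bijection of `μ_{q+1}`. -/
def gPermutes (q : ℕ) {K : Type*} [Field K] (a b c d : K) : Prop :=
  Set.BijOn (fun x => (numer₀ q a b c d).eval x * ((denom₀ q a b c d).eval x)⁻¹)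
    (mu q K) (mu q K)

lemma reflect3_cubic {K : Type*} [Field K] (a b c d : K) :
    reflect 3 (C a * X ^ 3 + C b * X ^ 2 + C c * X + C d) =
      C d * X ^ 3 + C c * X ^ 2 + C b * X + C a := by
  have h : (C a * X ^ 3 + C b * X ^ 2 + C c * X + C d : K[X]) =
      C a * X ^ 3 + C b * X ^ 2 + C c * X ^ 1 + C d * X ^ 0 := by ring
  rw [h, reflect_add, reflect_add, reflect_add, reflect_C_mul_X_pow,
    reflect_C_mul_X_pow, reflect_C_mul_X_pow, reflect_C_mul_X_pow]
  norm_num [revAt_le]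
  ring

lemma reflect1_linear {K : Type*} [Field K] (u v : K) :
    reflect 1 (C u * X + C v) = C v * X + C u := by
  have h : (C u * X + C v : K[X]) = C u * X ^ 1 + C v * X ^ 0 := by ring
  rw [h, reflect_add, reflect_C_mul_X_pow, reflect_C_mul_X_pow]
  norm_num [revAt_le]
  ring

/-- every degree-1 rational function of the shape `g = N/D`
permutes `μ_{q+1}`. -/
theorem stmt16 {K : Type*} [Field K] [Fintype K] (p m q : ℕ) (hp : p.Prime)
    (hm : 1 ≤ m) (hq : q = p ^ m) (hK : Fintype.card K = q ^ 2) (a b c d : K)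
    (hdeg : gDeg q a b c d = 1) :
    gPermutes q a b c d := by
  -- characteristic setup
  haveI hfp : Fact p.Prime := ⟨hp⟩
  haveI hchar : CharP K p := by
    obtain ⟨n, hr, hcard⟩ := FiniteField.card K (ringChar K)
    have hdvd : p ∣ ringChar K := by
      refine hp.dvd_of_dvd_pow (n := (n : ℕ)) ?_
      rw [← hcard, hK, hq, ← pow_mul]
      exact dvd_pow_self p (by positivity)
    have : p = ringChar K := (Nat.prime_dvd_prime_iff_eq hp hr).mp hdvd
    exact this ▸ ringChar.charP K
  -- Frobenius
  set φ : K →+* K := iterateFrobenius K p m with hφdef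
  have hφ : ∀ x : K, φ x = x ^ q := by
    intro x; rw [hφdef, iterateFrobenius_def, hq]
  have hfrobK : ∀ x : K, (x ^ q) ^ q = x := by
    intro x
    rw [← pow_mul, ← sq, ← hK, FiniteField.pow_card]
  -- abbreviations
  set N : K[X] := Npoly q a b c d with hNdef
  set D : K[X] := Dpoly a b c d with hDdef
  set G : K[X] := EuclideanDomain.gcd N D with hGdef
  set N₀ : K[X] := numer₀ q a b c d with hN₀def
  set D₀ : K[X] := denom₀ q a b c d with hD₀def
  -- star identities
  have hmapD : Polynomial.map φ D = C (a ^ q) * X ^ 3 + C (b ^ q) * X ^ 2 + C (c ^ q) * X + C (d ^ q) := by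
    rw [hDdef, Dpoly]
    simp [Polynomial.map_add, Polynomial.map_mul, Polynomial.map_pow, map_C, map_X, hφ]
  have hND : reflect 3 (Polynomial.map φ D) = N := by
    rw [hmapD, reflect3_cubic, hNdef, Npoly]
  have hmapN : Polynomial.map φ N = C d * X ^ 3 + C c * X ^ 2 + C b * X + C a := by
    rw [hNdef, Npoly]
    simp only [Polynomial.map_add, Polynomial.map_mul, Polynomial.map_pow, map_C, map_X, hφ]
    simp only [← C_pow, hfrobK]
  have hDN : reflect 3 (Polynomial.map φ N) = D := by
    rw [hmapN, reflect3_cubic, hDdef, Dpoly]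
  -- nonvanishing of D
  have hD0 : D ≠ 0 := by
    intro h0
    have hN0 : N = 0 := by rw [← hND, h0, Polynomial.map_zero, reflect_zero]
    have hG0 : G = 0 := by rw [hGdef, hN0, h0]; exact EuclideanDomain.gcd_zero_right 0
    have e1 : N₀ = 0 := by
      rw [hN₀def, numer₀, ← hNdef, ← hDdef, ← hGdef, hG0, EuclideanDomain.div_zero]
    have e2 : D₀ = 0 := by
      rw [hD₀def, denom₀, ← hNdef, ← hDdef, ← hGdef, hG0, EuclideanDomain.div_zero]
    have : gDeg q a b c d = 0 := by
      rw [gDeg, ← hN₀def, ← hD₀def, e1, e2]; simp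
    omega
  have hN0 : N ≠ 0 := by
    intro h0
    apply hD0
    rw [← hDN, h0, Polynomial.map_zero, reflect_zero]
  have hG0 : G ≠ 0 := fun h =>
    hN0 (EuclideanDomain.gcd_eq_zero_iff.mp h).1
  have hGdvdN : G ∣ N := EuclideanDomain.gcd_dvd_left N D
  have hGdvdD : G ∣ D := EuclideanDomain.gcd_dvd_right N D
  have hNfac : G * N₀ = N := by
    rw [hN₀def, numer₀, ← hNdef, ← hDdef, ← hGdef]
    exact EuclideanDomain.mul_div_cancel' hG0 hGdvdN
  have hDfac : G * D₀ = D := by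
    rw [hD₀def, denom₀, ← hNdef, ← hDdef, ← hGdef]
    exact EuclideanDomain.mul_div_cancel' hG0 hGdvdD
  have hD₀ne : D₀ ≠ 0 := by
    intro h0; apply hD0; rw [← hDfac, h0, mul_zero]
  -- coprimality (Bezout)
  obtain ⟨u, v, hcop⟩ : ∃ u v : K[X], N₀ * u + D₀ * v = 1 := by
    refine ⟨EuclideanDomain.gcdA N D, EuclideanDomain.gcdB N D, ?_⟩
    have hb := EuclideanDomain.gcd_eq_gcd_ab N D
    have key : G * (N₀ * EuclideanDomain.gcdA N D + D₀ * EuclideanDomain.gcdB N D) = G * 1 := by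
      rw [mul_one, mul_add, ← mul_assoc, ← mul_assoc, hNfac, hDfac, ← hb, ← hGdef]
    exact mul_left_cancel₀ hG0 key
  -- degree facts
  have hdeg' : max N₀.natDegree D₀.natDegree = 1 := by
    simp only [gDeg] at hdeg
    rw [← hN₀def, ← hD₀def] at hdeg
    exact hdeg
  have hndN₀ : N₀.natDegree ≤ 1 := le_max_left _ _ |>.trans hdeg'.le
  have hndD₀ : D₀.natDegree ≤ 1 := le_max_right _ _ |>.trans hdeg'.le
  have hndN : N.natDegree ≤ 3 := by
    rw [hNdef, Npoly]; compute_degree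
  have hndD : D.natDegree ≤ 3 := by
    rw [hDdef, Dpoly]; compute_degree
  have hndG : G.natDegree ≤ 2 := by
    rcases max_eq_iff.mp hdeg' with ⟨h1, _⟩ | ⟨h1, _⟩
    · have hne : N₀ ≠ 0 := fun h => by simp [h] at h1
      have := natDegree_mul hG0 hne
      rw [hNfac] at this
      omega
    · have hne : D₀ ≠ 0 := fun h => by simp [h] at h1
      have := natDegree_mul hG0 hne
      rw [hDfac] at this
      omega
  -- Claim A : N₀ * N₀* = D₀ * D₀*
  set Gs : K[X] := reflect 2 (Polynomial.map φ G) with hGsdef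
  set Ns : K[X] := reflect 1 (Polynomial.map φ N₀) with hNsdef
  set Ds : K[X] := reflect 1 (Polynomial.map φ D₀) with hDsdef
  have hfacN : N = Gs * Ds := by
    have : (3 : ℕ) = 2 + 1 := rfl
    rw [← hND, ← hDfac, Polynomial.map_mul, this,
      reflect_mul _ _ (natDegree_map_le.trans hndG) (natDegree_map_le.trans hndD₀)]
  have hfacD : D = Gs * Ns := by
    have : (3 : ℕ) = 2 + 1 := rfl
    rw [← hDN, ← hNfac, Polynomial.map_mul, this,
      reflect_mul _ _ (natDegree_map_le.trans hndG) (natDegree_map_le.trans hndN₀)]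
  have hGs0 : Gs ≠ 0 := by
    intro h0; apply hD0; rw [hfacD, h0, zero_mul]
  have claimA : N₀ * Ns = D₀ * Ds := by
    have key : (N₀ * Ns) * (G * Gs) = (D₀ * Ds) * (G * Gs) := by
      calc (N₀ * Ns) * (G * Gs) = (G * N₀) * (Gs * Ns) := by ring
      _ = N * D := by rw [hNfac, ← hfacD]
      _ = (G * D₀) * (Gs * Ds) := by rw [hDfac, ← hfacN]; ring
      _ = (D₀ * Ds) * (G * Gs) := by ring
    exact mul_right_cancel₀ (mul_ne_zero hG0 hGs0) key
  -- explicit linear forms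
  set α : K := N₀.coeff 1 with hα'
  set β : K := N₀.coeff 0 with hβ'
  set γ : K := D₀.coeff 1 with hγ'
  set δ : K := D₀.coeff 0 with hδ'
  have hN₀eq : N₀ = C α * X + C β := eq_X_add_C_of_natDegree_le_one hndN₀
  have hD₀eq : D₀ = C γ * X + C δ := eq_X_add_C_of_natDegree_le_one hndD₀
  have hNs : Ns = C (β ^ q) * X + C (α ^ q) := by
    rw [hNsdef, hN₀eq]
    simp only [Polynomial.map_add, Polynomial.map_mul, map_C, map_X, hφ]
    exact reflect1_linear _ _
  have hDs : Ds = C (δ ^ q) * X + C (γ ^ q) := by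
    rw [hDsdef, hD₀eq]
    simp only [Polynomial.map_add, Polynomial.map_mul, map_C, map_X, hφ]
    exact reflect1_linear _ _
  -- basic facts about μ
  have hmux : ∀ x ∈ mu q K, x ^ (q + 1) = 1 := fun x hx => hx
  have hmu0 : ∀ x ∈ mu q K, x ≠ 0 := by
    intro x hx h0
    have h1 : x ^ (q + 1) = 1 := hx
    rw [h0, zero_pow (Nat.succ_ne_zero q)] at h1
    exact zero_ne_one h1
  -- "star" evaluation on μ
  have hstar : ∀ x ∈ mu q K, ∀ u v : K, v ^ q * x + u ^ q = x * (u * x + v) ^ q := by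
    intro x hx u v
    have h1 : x ^ q * x = 1 := by rw [← pow_succ]; exact hmux x hx
    calc v ^ q * x + u ^ q
        = u ^ q * (x ^ q * x) + v ^ q * x := by rw [h1]; ring
      _ = x * (u ^ q * x ^ q + v ^ q) := by ring
      _ = x * ((u * x) ^ q + v ^ q) := by rw [mul_pow]
      _ = x * (u * x + v) ^ q := by rw [hq, add_pow_char_pow]
  -- the key power identity on μ
  have hpowEq : ∀ x ∈ mu q K, (N₀.eval x) ^ (q + 1) = (D₀.eval x) ^ (q + 1) := by
    intro x hx
    have hxne : x ≠ 0 := hmu0 x hx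
    have e1 : Ns.eval x = x * (N₀.eval x) ^ q := by
      rw [hNs, hN₀eq]
      simp only [eval_add, eval_mul, eval_C, eval_X]
      exact hstar x hx α β
    have e2 : Ds.eval x = x * (D₀.eval x) ^ q := by
      rw [hDs, hD₀eq]
      simp only [eval_add, eval_mul, eval_C, eval_X]
      exact hstar x hx γ δ
    have hevA : N₀.eval x * Ns.eval x = D₀.eval x * Ds.eval x := by
      have := congrArg (eval x) claimA
      simpa only [eval_mul] using this
    have key : x * (N₀.eval x) ^ (q + 1) = x * (D₀.eval x) ^ (q + 1) := by
      calc x * (N₀.eval x) ^ (q + 1)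
          = N₀.eval x * (x * (N₀.eval x) ^ q) := by rw [pow_succ]; ring
        _ = N₀.eval x * Ns.eval x := by rw [e1]
        _ = D₀.eval x * Ds.eval x := hevA
        _ = D₀.eval x * (x * (D₀.eval x) ^ q) := by rw [e2]
        _ = x * (D₀.eval x) ^ (q + 1) := by rw [pow_succ]; ring
    exact mul_left_cancel₀ hxne key
  -- the denominator does not vanish on μ
  have hD₀x : ∀ x ∈ mu q K, D₀.eval x ≠ 0 := by
    intro x hx h0
    have h1 : (N₀.eval x) ^ (q + 1) = 0 := by
      rw [hpowEq x hx, h0, zero_pow (Nat.succ_ne_zero q)]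
    have h2 : N₀.eval x = 0 := pow_eq_zero_iff (Nat.succ_ne_zero q) |>.mp h1
    have := congrArg (eval x) hcop
    simp only [eval_add, eval_mul, eval_one, h0, h2, zero_mul, add_zero] at this
    exact zero_ne_one this
  -- the function
  have hmaps : Set.MapsTo (fun x => N₀.eval x * (D₀.eval x)⁻¹) (mu q K) (mu q K) := by
    intro x hx
    show (N₀.eval x * (D₀.eval x)⁻¹) ^ (q + 1) = 1
    rw [mul_pow, inv_pow, hpowEq x hx,
      mul_inv_cancel₀ (pow_ne_zero _ (hD₀x x hx))]
  -- the determinant is nonzero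
  have hΔ : α * δ - β * γ ≠ 0 := by
    intro hΔ0
    have e : α * δ = β * γ := sub_eq_zero.mp hΔ0
    by_cases hA : α = 0
    · by_cases hG : γ = 0
      · rw [hN₀eq, hD₀eq, hA, hG] at hdeg'
        simp [natDegree_C] at hdeg'
      · have hB : β = 0 := by
          have e2 : β * γ = 0 := by rw [← e, hA, zero_mul]
          exact (mul_eq_zero.mp e2).resolve_right hG
        have hN₀z : N₀ = 0 := by rw [hN₀eq, hA, hB]; simp
        rw [hN₀z, zero_mul, zero_add] at hcop
        have hdvd : D₀ ∣ 1 := ⟨v, hcop.symm⟩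
        have h1 : D₀.natDegree = 1 := by rw [hD₀eq]; exact natDegree_linear hG
        have h2 := natDegree_le_of_dvd hdvd one_ne_zero
        simp [natDegree_one] at h2
        omega
    · have hId : C α * D₀ = C γ * N₀ := by
        rw [hN₀eq, hD₀eq, mul_add, mul_add, ← mul_assoc, ← mul_assoc,
          ← C_mul, ← C_mul, ← C_mul, ← C_mul]
        refine congrArg₂ HAdd.hAdd ?_ ?_
        · rw [mul_comm α γ]
        · rw [e, mul_comm β γ]
      by_cases hG : γ = 0
      · apply hD₀ne
        have h0 : C α * D₀ = 0 := by rw [hId, hG]; simp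
        have hCα : (C α : K[X]) ≠ 0 := by simpa using hA
        exact (mul_eq_zero.mp h0).resolve_left hCα
      · have h1 : N₀.natDegree = 1 := by rw [hN₀eq]; exact natDegree_linear hA
        have hdvd : N₀ ∣ C α := by
          refine ⟨C α * u + C γ * v, ?_⟩
          have h2 : N₀ * (C α * u + C γ * v) = C α * (N₀ * u + D₀ * v) := by
            linear_combination -v * hId
          rw [h2, hcop, mul_one]
        have hCα : (C α : K[X]) ≠ 0 := by simpa using hA
        have h3 := natDegree_le_of_dvd hdvd hCα
        rw [natDegree_C] at h3
        omega
  -- injectivity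
  have hinj : Set.InjOn (fun x => N₀.eval x * (D₀.eval x)⁻¹) (mu q K) := by
    intro x hx y hy hfeq
    have hx' : D₀.eval x ≠ 0 := hD₀x x hx
    have hy' : D₀.eval y ≠ 0 := hD₀x y hy
    simp only at hfeq
    have hcross : N₀.eval x * D₀.eval y = N₀.eval y * D₀.eval x := by
      field_simp [hx', hy'] at hfeq
      linear_combination hfeq
    rw [hN₀eq, hD₀eq] at hcross
    simp only [eval_add, eval_mul, eval_C, eval_X] at hcross
    have hz : (α * δ - β * γ) * (x - y) = 0 := by linear_combination hcross
    rcases mul_eq_zero.mp hz with h | h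
    · exact absurd h hΔ
    · exact sub_eq_zero.mp h
  -- conclusion
  have hfin : (mu q K).Finite := Set.toFinite _
  show Set.BijOn (fun x => N₀.eval x * (D₀.eval x)⁻¹) (mu q K) (mu q K)
  exact (hfin.injOn_iff_bijOn_of_mapsTo hmaps).mp hinj
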